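/- arXiv:1606.04125 — 3 statements merged into one kernel-verified Lean document; each statement's English description precedes it below -/
import Mathlib

section
/- Let f be a consensus function on the n-cube Q_n. Then f equals the center function Cen if and only if f satisfies the Translation property (T) and for every profile π: the all-zeros vertex 𝟎 belongs to f(π) if and only if ‖π‖ ≤ ‖π ⊕ u‖ for every vertex u of Q_n. -/
/-- A vertex of the n-cube `Q_n`: an element of `{0,1}^n`. -/
abbrev Vertex (n : ℕ) := Fin n → Bool

/-- Coordinatewise addition modulo 2 (`u ⊕ v`). -/
def vxor {n : ℕ} (u v : Vertex n) : Vertex n := fun i => xor (u i) (v i)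

/-- A profile: a nonempty finite sequence of vertices of `Q_n`. -/
def Profile (n : ℕ) := { l : List (Vertex n) // l ≠ [] }

/-- Translation of a profile: `π ⊕ v = (x₁ ⊕ v, …, x_k ⊕ v)`. -/
def pxor {n : ℕ} (π : Profile n) (v : Vertex n) : Profile n :=
  ⟨π.1.map (fun x => vxor x v), by simpa using π.2⟩

/-- The Translation property (T) for a consensus function. -/
def Translation {n : ℕ} (f : Profile n → Set (Vertex n)) : Prop :=
  ∀ (π : Profile n) (u v : Vertex n), u ∈ f π → vxor u v ∈ f (pxor π v)

/-- Hamming distance on the n-cube. -/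
def cubeDist {n : ℕ} (u v : Vertex n) : ℕ := hammingDist u v

/-- The all-zeros vertex `𝟎`. -/
def zeroV (n : ℕ) : Vertex n := fun _ => false

/-- `‖u‖ = d(𝟎,u)`, the number of ones in `u`. -/
def vnorm {n : ℕ} (u : Vertex n) : ℕ := cubeDist (zeroV n) u

/-- `‖π‖ = max{‖x₁‖,…,‖x_k‖}`. -/
def pnorm {n : ℕ} (π : Profile n) : ℕ := (π.1.map vnorm).foldr max 0

/-- Eccentricity `e(x, π) = max_j d(x, x_j)`. -/
def ecc {n : ℕ} (π : Profile n) (x : Vertex n) : ℕ :=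
  (π.1.map (fun y => cubeDist x y)).foldr max 0

/-- The center function. -/
def Cen {n : ℕ} (π : Profile n) : Set (Vertex n) :=
  {x | ∀ y : Vertex n, ecc π x ≤ ecc π y}

/-- Status `S_π(x) = Σ_j d(x, x_j)`. -/
def status {n : ℕ} (π : Profile n) (x : Vertex n) : ℕ :=
  (π.1.map (fun y => cubeDist x y)).sum

/-- The median function. -/
def Med {n : ℕ} (π : Profile n) : Set (Vertex n) :=
  {x | ∀ y : Vertex n, status π x ≤ status π y}

/-- The anti-median function. -/
def AM {n : ℕ} (π : Profile n) : Set (Vertex n) :=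
  {x | ∀ y : Vertex n, status π y ≤ status π x}

/-- `Σ_{j=1}^k xᵢ^j`: the number of profile entries with a 1 in coordinate `i`. -/
def cnt {n : ℕ} (π : Profile n) (i : Fin n) : ℕ :=
  (π.1.map (fun x => if x i then 1 else 0)).sum

/-- The majority vertex `Maj(π)`: `wᵢ = 1` iff `Σ_j xᵢ^j > k/2`. -/
def Maj {n : ℕ} (π : Profile n) : Vertex n :=
  fun i => decide (π.1.length < 2 * cnt π i)

/-- The minority vertex `Min(π)`: `mᵢ = 1` iff `Σ_j xᵢ^j < k/2`. -/
def MinV {n : ℕ} (π : Profile n) : Vertex n :=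
  fun i => decide (2 * cnt π i < π.1.length)

/-- The Condorcet score `Cs(π)`. -/
def Cs {n : ℕ} (π : Profile n) : ℕ :=
  (Finset.univ.filter (fun i : Fin n => 2 * cnt π i = π.1.length)).card

/-- The Majority property (Maj). -/
def MajProp {n : ℕ} (f : Profile n → Set (Vertex n)) : Prop :=
  ∀ π : Profile n, Maj π ∈ f π

/-- The Minority property (Min). -/
def MinProp {n : ℕ} (f : Profile n → Set (Vertex n)) : Prop :=
  ∀ π : Profile n, MinV π ∈ f π

/-- The Restricted Range property (RR): `|f(π)| ≤ 2^{Cs(π)}`. -/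
def RestrictedRange {n : ℕ} (f : Profile n → Set (Vertex n)) : Prop :=
  ∀ π : Profile n, (f π).ncard ≤ 2 ^ Cs π

/-- The `ℓ_p` status `ℓ_pS_π(x) = Σ_j d(x,x_j)^p`. -/
noncomputable def lpStatus {n : ℕ} (p : ℝ) (π : Profile n) (x : Vertex n) : ℝ :=
  (π.1.map (fun y => (cubeDist x y : ℝ) ^ p)).sum

/-- The `ℓ_p`-function. -/
noncomputable def lpFun {n : ℕ} (p : ℝ) (π : Profile n) : Set (Vertex n) :=
  {x | ∀ y : Vertex n, lpStatus p π x ≤ lpStatus p π y}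

/-- The `p`-Characteristic `Char_p(π) = Σ_j ‖x_j‖^p`. -/
noncomputable def Charp {n : ℕ} (p : ℝ) (π : Profile n) : ℝ :=
  (π.1.map (fun x => (vnorm x : ℝ) ^ p)).sum

/-- Concatenation of profiles `π₁π₂`. -/
def pconcat {n : ℕ} (π₁ π₂ : Profile n) : Profile n :=
  ⟨π₁.1 ++ π₂.1, by simp [π₁.2]⟩

/-- The profile of length one consisting of the single vertex `x`. -/
def singleP {n : ℕ} (x : Vertex n) : Profile n := ⟨[x], by simp⟩

/-- The Consistency property (C). -/
def Consistency {n : ℕ} (f : Profile n → Set (Vertex n)) : Prop :=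
  ∀ π₁ π₂ : Profile n, (f π₁ ∩ f π₂).Nonempty → f (pconcat π₁ π₂) = f π₁ ∩ f π₂

lemma vxor_vxor {n : ℕ} (x u : Vertex n) : vxor (vxor x u) u = x := by
  funext i; simp [vxor]

lemma vxor_self {n : ℕ} (u : Vertex n) : vxor u u = zeroV n := by
  funext i; simp [vxor, zeroV]

lemma zero_vxor {n : ℕ} (u : Vertex n) : vxor (zeroV n) u = u := by
  funext i; simp [vxor, zeroV]

lemma vxor_cancel_left {n : ℕ} (u v : Vertex n) : vxor u (vxor u v) = v := by
  funext i; simp [vxor, Bool.xor_comm]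

lemma cubeDist_vxor {n : ℕ} (x y v : Vertex n) :
    cubeDist x (vxor y v) = cubeDist (vxor x v) y := by
  unfold cubeDist hammingDist vxor
  congr 1
  apply Finset.filter_congr
  intro i _
  cases x i <;> cases y i <;> cases v i <;> simp

lemma ecc_pxor {n : ℕ} (π : Profile n) (x v : Vertex n) :
    ecc (pxor π v) x = ecc π (vxor x v) := by
  unfold ecc pxor
  rw [List.map_map]
  congr 1
  apply List.map_congr_left
  intro y _
  exact cubeDist_vxor x y v

lemma vnorm_vxor {n : ℕ} (x u : Vertex n) : vnorm (vxor x u) = cubeDist u x := by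
  unfold vnorm
  rw [cubeDist_vxor]
  congr 1
  exact zero_vxor u

lemma pnorm_pxor {n : ℕ} (π : Profile n) (u : Vertex n) :
    pnorm (pxor π u) = ecc π u := by
  unfold pnorm pxor ecc
  rw [List.map_map]
  congr 1
  apply List.map_congr_left
  intro y _
  exact vnorm_vxor y u

lemma pnorm_eq_ecc_zero {n : ℕ} (π : Profile n) : pnorm π = ecc π (zeroV n) := rfl

lemma pxor_pxor {n : ℕ} (π : Profile n) (u w : Vertex n) :
    pxor (pxor π u) w = pxor π (vxor u w) := by
  apply Subtype.ext
  simp only [pxor, List.map_map]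
  apply List.map_congr_left
  intro x _
  funext i
  simp [vxor, Bool.xor_assoc]

lemma pxor_cancel {n : ℕ} (π : Profile n) (u : Vertex n) :
    pxor (pxor π u) u = π := by
  rw [pxor_pxor, vxor_self]
  apply Subtype.ext
  simp only [pxor]
  rw [List.map_congr_left (fun x _ => by rw [show vxor x (zeroV n) = x from by funext i; simp [vxor, zeroV]])]
  exact List.map_id _

/-- `f = Cen` iff `f` satisfies (T) and for every profile `π`,
`𝟎 ∈ f(π)` iff `‖π‖ ≤ ‖π ⊕ u‖` for all `u`. -/
theorem stmt2 {n : ℕ} (f : Profile n → Set (Vertex n))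
    (hf : ∀ π : Profile n, (f π).Nonempty) :
    f = Cen ↔
      (Translation f ∧
        ∀ π : Profile n, (zeroV n ∈ f π ↔ ∀ u : Vertex n, pnorm π ≤ pnorm (pxor π u))) := by
  constructor
  · rintro rfl
    constructor
    · intro π u v hu y
      simp only [Cen, Set.mem_setOf_eq] at hu ⊢
      rw [ecc_pxor, vxor_vxor, ecc_pxor]
      exact hu _
    · intro π
      simp only [Cen, Set.mem_setOf_eq]
      constructor
      · intro h u
        rw [pnorm_eq_ecc_zero, pnorm_pxor]; exact h u
      · intro h u
        have := h u
        rwa [pnorm_eq_ecc_zero, pnorm_pxor] at this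
  · rintro ⟨hT, hZ⟩
    funext π
    ext u
    have key : u ∈ f π ↔ zeroV n ∈ f (pxor π u) := by
      constructor
      · intro h
        have := hT π u u h
        rwa [vxor_self] at this
      · intro h
        have := hT (pxor π u) (zeroV n) u h
        rwa [zero_vxor, pxor_cancel] at this
    rw [key, hZ]
    simp only [Cen, Set.mem_setOf_eq]
    constructor
    · intro h v
      have := h (vxor u v)
      rwa [pnorm_pxor, pxor_pxor, pnorm_pxor, vxor_cancel_left] at this
    · intro h w
      rw [pnorm_pxor, pxor_pxor, pnorm_pxor]
      exact h _
end

section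
/- A consensus function f on the n-cube Q_n satisfies the Translation property (T), the Consistency property (C), and the condition ⋂_{x ∈ X} f(x) ≠ ∅ (where f(x) denotes the value of f on the profile of length one consisting of the single vertex x) if and only if f is the constant function f₂ with f₂(π) = X for all profiles π. -/
/-- A consensus function `f` on `Q_n` satisfies (T), (C) and `⋂_{x ∈ X} f(x) ≠ ∅`
iff `f` is the constant function `f₂` with `f₂(π) = X` for all profiles `π`. -/
theorem stmt11 {n : ℕ} (f : Profile n → Set (Vertex n))
    (hf : ∀ π : Profile n, (f π).Nonempty) :
    (Translation f ∧ Consistency f ∧ (⋂ x : Vertex n, f (singleP x)) ≠ ∅) ↔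
      f = fun _ => (Set.univ : Set (Vertex n)) := by
  constructor
  · rintro ⟨hT, hC, hI⟩
    -- some w in all f(singleP x)
    obtain ⟨w, hw⟩ := Set.nonempty_iff_ne_empty.mpr hI
    simp only [Set.mem_iInter] at hw
    -- Step 1: f(singleP y) = univ for all y
    have h1 : ∀ y : Vertex n, f (singleP y) = Set.univ := by
      intro y
      ext u
      simp only [Set.mem_univ, iff_true]
      have hx := hT (singleP (vxor y (vxor w u))) w (vxor w u) (hw _)
      have e1 : vxor w (vxor w u) = u := by
        funext i; simp [vxor, Bool.xor_assoc]
      have e2 : pxor (singleP (vxor y (vxor w u))) (vxor w u) = singleP y := by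
        apply Subtype.ext
        show [vxor (vxor y (vxor w u)) (vxor w u)] = [y]
        congr 1
        funext i; simp [vxor, Bool.xor_assoc]
      rwa [e1, e2] at hx
    -- Step 2: f π = univ for all π, by induction on the list
    have key : ∀ (l : List (Vertex n)) (h : l ≠ []), f ⟨l, h⟩ = Set.univ := by
      intro l
      induction l with
      | nil => intro h; exact absurd rfl h
      | cons x rest ih =>
        intro h
        cases rest with
        | nil => exact h1 x
        | cons y t =>
          have hrest : (y :: t : List (Vertex n)) ≠ [] := by simp
          have hcon : (⟨x :: y :: t, h⟩ : Profile n)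
              = pconcat (singleP x) ⟨y :: t, hrest⟩ := rfl
          have hne : (f (singleP x) ∩ f ⟨y :: t, hrest⟩).Nonempty := by
            rw [h1 x, ih hrest]
            exact ⟨fun _ => false, by simp⟩
          rw [hcon, hC _ _ hne, h1 x, ih hrest, Set.univ_inter]
    funext π
    obtain ⟨l, h⟩ := π
    exact key l h
  · rintro rfl
    refine ⟨fun _ _ _ _ => Set.mem_univ _, fun _ _ _ => by simp, ?_⟩
    intro hcon
    have : (zeroV n) ∈ (⋂ x : Vertex n, (Set.univ : Set (Vertex n))) := by
      simp
    rw [hcon] at this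
    exact this
end

section
/- For every profile π on the n-cube Q_n, the median set satisfies |Med(π)| = 2^{Cs(π)}, where Cs(π) is the Condorcet score of π. In particular, Med satisfies the Restricted Range property (RR). -/
section MedAux

variable {n : ℕ}

def gfun (π : Profile n) (i : Fin n) (b : Bool) : ℕ :=
  if b then π.1.length - cnt π i else cnt π i

lemma cnt_le' (l : List (Vertex n)) (i : Fin n) :
    (l.map (fun x => if x i then 1 else 0)).sum ≤ l.length := by
  induction l with
  | nil => simp
  | cons a t ih =>
    simp only [List.map_cons, List.sum_cons, List.length_cons]
    have h1 : (if a i then 1 else 0) ≤ 1 := by cases a i <;> simp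
    generalize (List.map (fun x : Vertex n => if x i then 1 else 0) t).sum = s at *
    omega

lemma cnt_le (π : Profile n) (i : Fin n) : cnt π i ≤ π.1.length := cnt_le' π.1 i

lemma list_sum_fin (l : List (Vertex n)) (h : Vertex n → Fin n → ℕ) :
    (l.map (fun y => ∑ i, h y i)).sum = ∑ i, (l.map (fun y => h y i)).sum := by
  induction l with
  | nil => simp
  | cons a t ih => simp [ih, Finset.sum_add_distrib]

lemma sum_ne_add (l : List (Vertex n)) (i : Fin n) :
    (l.map (fun y => if (true : Bool) ≠ y i then 1 else 0)).sum
      + (l.map (fun y => if y i then 1 else 0)).sum = l.length := by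
  induction l with
  | nil => simp
  | cons a t ih =>
    simp only [List.map_cons, List.sum_cons, List.length_cons]
    generalize (List.map (fun y : Vertex n => if (true : Bool) ≠ y i then 1 else 0) t).sum = A at *
    generalize (List.map (fun y : Vertex n => if y i then 1 else 0) t).sum = B at *
    cases ha : a i <;> simp [ha] <;> omega

lemma status_eq (π : Profile n) (x : Vertex n) :
    status π x = ∑ i, gfun π i (x i) := by
  have hd : ∀ y : Vertex n, cubeDist x y = ∑ i, (if x i ≠ y i then 1 else 0) := by
    intro y
    simp [cubeDist, hammingDist, Finset.card_filter]
  have h1 : status π x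
      = ∑ i, (π.1.map (fun y => if x i ≠ y i then 1 else 0)).sum := by
    unfold status
    rw [show (fun y => cubeDist x y) = fun y => ∑ i, (if x i ≠ y i then 1 else 0)
      from funext hd]
    exact list_sum_fin _ _
  rw [h1]
  refine Finset.sum_congr rfl fun i _ => ?_
  cases hx : x i with
  | false =>
    have : (fun y : Vertex n => if (false : Bool) ≠ y i then 1 else 0)
        = fun y => if y i then 1 else 0 := by
      funext y; cases hy : y i <;> simp [hy]
    rw [this]; simp [gfun, cnt]
  | true =>
    have h2 := sum_ne_add π.1 i
    have hc := cnt_le π i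
    have hg : gfun π i true = π.1.length - cnt π i := by simp [gfun]
    rw [hg]
    unfold cnt
    exact Nat.eq_sub_of_add_eq h2

def tset (π : Profile n) (i : Fin n) : Finset Bool :=
  if 2 * cnt π i = π.1.length then Finset.univ else {Maj π i}

lemma med_eq (π : Profile n) : Med π = ↑(Fintype.piFinset (tset π)) := by
  have hmin : ∀ i, min (gfun π i true) (gfun π i false)
      = gfun π i (decide (gfun π i true ≤ gfun π i false)) := by
    intro i
    by_cases h : gfun π i true ≤ gfun π i false
    · simp [h, min_eq_left h]
    · simp [h, min_eq_right (le_of_not_ge h)]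
  set w : Vertex n := fun i => decide (gfun π i true ≤ gfun π i false) with hw
  have hwmin : ∀ x : Vertex n, ∀ i, gfun π i (w i) ≤ gfun π i (x i) := by
    intro x i
    rw [← hmin i]
    cases x i <;> simp
  have hmem : ∀ x : Vertex n, x ∈ Med π ↔ ∀ i, gfun π i (x i) = gfun π i (w i) := by
    intro x
    constructor
    · intro hx
      have h1 : status π x ≤ status π w := hx w
      rw [status_eq, status_eq] at h1
      have := (Finset.sum_eq_sum_iff_of_le (fun i _ => hwmin x i)).mp
        (le_antisymm (Finset.sum_le_sum fun i _ => hwmin x i) h1)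
      exact fun i => (this i (Finset.mem_univ i)).symm
    · intro h y
      rw [status_eq π x, status_eq π y]
      calc ∑ i, gfun π i (x i) = ∑ i, gfun π i (w i) :=
            Finset.sum_congr rfl fun i _ => h i
        _ ≤ _ := Finset.sum_le_sum fun i _ => hwmin y i
  ext x
  rw [hmem]
  simp only [Finset.coe_sort_coe, Finset.mem_coe, Fintype.mem_piFinset]
  have key : ∀ i, (gfun π i (x i) = gfun π i (w i)) ↔ x i ∈ tset π i := by
    intro i
    have hc := cnt_le π i
    have hT : gfun π i true = π.1.length - cnt π i := by simp [gfun]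
    have hF : gfun π i false = cnt π i := by simp [gfun]
    unfold tset
    by_cases h : 2 * cnt π i = π.1.length
    · have hg : ∀ b, gfun π i b = cnt π i := by
        intro b; cases b <;> simp [hT, hF] <;> omega
      simp [h, hg]
    · rw [if_neg h]
      have hgi : ∀ b b' : Bool, gfun π i b = gfun π i b' ↔ b = b' := by
        intro b b'; cases b <;> cases b' <;> simp [hT, hF] <;> omega
      have hwMaj : w i = Maj π i := by
        show decide (gfun π i true ≤ gfun π i false) = decide (π.1.length < 2 * cnt π i)
        apply decide_eq_decide.mpr
        rw [hT, hF]
        constructor <;> intro <;> omega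
      rw [hgi, hwMaj, Finset.mem_singleton]
  exact forall_congr' key

end MedAux

/-- For every profile `π` on `Q_n`, `|Med(π)| = 2^{Cs(π)}`; in particular, `Med`
satisfies the Restricted Range property (RR). -/
theorem stmt13 {n : ℕ} :
    (∀ π : Profile n, (Med π).ncard = 2 ^ Cs π) ∧ RestrictedRange (Med (n := n)) := by
  have main : ∀ π : Profile n, (Med π).ncard = 2 ^ Cs π := by
    intro π
    rw [med_eq π, Set.ncard_coe_finset, Fintype.card_piFinset]
    unfold Cs
    rw [← Finset.prod_filter_mul_prod_filter_not
      Finset.univ (fun i => 2 * cnt π i = π.1.length) (fun i => (tset π i).card)]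
    have h1 : ∀ i ∈ Finset.univ.filter (fun i : Fin n => 2 * cnt π i = π.1.length),
        (tset π i).card = 2 := by
      intro i hi; simp only [Finset.mem_filter] at hi
      simp [tset, hi.2]
    have h2 : ∀ i ∈ Finset.univ.filter (fun i : Fin n => ¬ 2 * cnt π i = π.1.length),
        (tset π i).card = 1 := by
      intro i hi; simp only [Finset.mem_filter] at hi
      simp [tset, hi.2]
    rw [Finset.prod_congr rfl h1, Finset.prod_congr rfl h2]
    simp
  exact ⟨main, fun π => le_of_eq (main π)⟩
end
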